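/- A function G: Γ × Γ → ℂ is the 2D-Fock transform of some continuous linear operator T: S → S* (i.e., G(σ,τ) = ⟨⟨T Z_σ, Z_τ⟩⟩ for all σ,τ) if and only if there exist constants C ≥ 0 and p ≥ 0 such that |G(σ,τ)| ≤ C λ_σ^p λ_τ^p for all σ, τ ∈ Γ; moreover such T is unique. -/

import Mathlib

open scoped BigOperators

/-- `lam σ = ∏_{k∈σ} (1+k)`. -/
noncomputable def lam (σ : Finset ℕ) : ℝ := ∏ k ∈ σ, (1 + k : ℝ)

/-- The `S_q`-norm of a finitely supported test functional `ξ = ∑_σ ξ_σ Z_σ`. -/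
noncomputable def normq (q : ℝ) (ξ : Finset ℕ →₀ ℂ) : ℝ :=
  Real.sqrt (∑ σ ∈ ξ.support, lam σ ^ (2 * q) * ‖ξ σ‖ ^ 2)

lemma one_le_lam (σ : Finset ℕ) : 1 ≤ lam σ := by
  unfold lam
  have h := Finset.prod_le_prod (ι := ℕ) (s := σ) (f := fun _ => (1:ℝ)) (g := fun k => (1 + k : ℝ))
    (fun i _ => zero_le_one) (fun i _ => by
      show (1:ℝ) ≤ 1 + (i:ℝ)
      have : (0:ℝ) ≤ (i:ℝ) := Nat.cast_nonneg i
      linarith)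
  simpa using h

lemma lam_pos (σ : Finset ℕ) : 0 < lam σ := zero_lt_one.trans_le (one_le_lam σ)

lemma normq_nonneg (q : ℝ) (ξ : Finset ℕ →₀ ℂ) : 0 ≤ normq q ξ := Real.sqrt_nonneg _

lemma lam_rpow_sq (σ : Finset ℕ) (q : ℝ) : lam σ ^ (2 * q) = (lam σ ^ q) ^ 2 := by
  rw [two_mul, Real.rpow_add (lam_pos σ), sq]

lemma normq_single (q : ℝ) (σ : Finset ℕ) :
    normq q (Finsupp.single σ (1 : ℂ)) = lam σ ^ q := by
  have h : (Finsupp.single σ (1 : ℂ)).support = {σ} := Finsupp.support_single_ne_zero _ one_ne_zero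
  rw [normq, h, Finset.sum_singleton, Finsupp.single_eq_same, norm_one, lam_rpow_sq]
  simp [Real.sqrt_sq (Real.rpow_nonneg (lam_pos σ).le q)]

lemma term_le_normq (q : ℝ) (ξ : Finset ℕ →₀ ℂ) (σ : Finset ℕ) :
    lam σ ^ q * ‖ξ σ‖ ≤ normq q ξ := by
  by_cases h : ξ σ = 0
  · simp [h, normq_nonneg]
  · have hmem : σ ∈ ξ.support := Finsupp.mem_support_iff.2 h
    have h1 : (lam σ ^ q * ‖ξ σ‖) ^ 2 ≤ ∑ τ ∈ ξ.support, lam τ ^ (2 * q) * ‖ξ τ‖ ^ 2 := by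
      rw [mul_pow, ← lam_rpow_sq]
      apply Finset.single_le_sum _ hmem
      intro τ _
      have := (lam_pos τ).le
      positivity
    have hnn : 0 ≤ lam σ ^ q * ‖ξ σ‖ :=
      mul_nonneg (Real.rpow_nonneg (lam_pos σ).le q) (norm_nonneg _)
    calc lam σ ^ q * ‖ξ σ‖ = Real.sqrt ((lam σ ^ q * ‖ξ σ‖) ^ 2) := by
          rw [Real.sqrt_sq hnn]
      _ ≤ normq q ξ := Real.sqrt_le_sqrt h1

lemma basel (N : ℕ) : ∑ k ∈ Finset.range N, (((1 : ℝ) + k) ^ 2)⁻¹ ≤ 2 := by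
  have key : ∀ n : ℕ, ∑ k ∈ Finset.range (n + 1), (((1 : ℝ) + k) ^ 2)⁻¹ ≤ 2 - ((n : ℝ) + 1)⁻¹ := by
    intro n
    induction n with
    | zero => norm_num
    | succ m ih =>
      rw [Finset.sum_range_succ]
      have h1 : (((1 : ℝ) + (m + 1)) ^ 2)⁻¹ ≤ ((m : ℝ) + 1)⁻¹ - ((m : ℝ) + 2)⁻¹ := by
        rw [inv_sub_inv (by positivity) (by positivity)]
        rw [div_eq_mul_inv]
        push_cast
        rw [show ((m:ℝ) + 2 - (m + 1)) = 1 by ring, one_mul]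
        apply inv_anti₀ (by positivity)
        nlinarith [sq_nonneg ((m:ℝ)+1)]
      have h2 : ((m:ℝ) + 1 + 1)⁻¹ = ((m:ℝ) + 2)⁻¹ := by ring_nf
      push_cast at ih h1 ⊢
      rw [h2]
      linarith
  cases N with
  | zero => simp
  | succ n =>
    have h0 : (0:ℝ) ≤ ((n:ℝ) + 1)⁻¹ := by positivity
    linarith [key n]

lemma sum_lam_inv_le (s : Finset (Finset ℕ)) : ∑ σ ∈ s, ((lam σ) ^ 2)⁻¹ ≤ Real.exp 2 := by
  set N : ℕ := s.sup (fun σ => σ.sup id) + 1 with hN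
  have hsub : s ⊆ (Finset.range N).powerset := by
    intro σ hσ
    rw [Finset.mem_powerset]
    intro k hk
    rw [Finset.mem_range]
    have : k ≤ σ.sup id := Finset.le_sup (f := id) hk
    have h2 : σ.sup id ≤ s.sup (fun σ => σ.sup id) := Finset.le_sup hσ
    omega
  have h1 : ∑ σ ∈ s, ((lam σ) ^ 2)⁻¹ ≤ ∑ σ ∈ (Finset.range N).powerset, ((lam σ) ^ 2)⁻¹ :=
    Finset.sum_le_sum_of_subset_of_nonneg hsub (fun σ _ _ => by positivity)
  have h2 : ∑ σ ∈ (Finset.range N).powerset, ((lam σ) ^ 2)⁻¹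
      = ∏ k ∈ Finset.range N, ((((1:ℝ) + k) ^ 2)⁻¹ + 1) := by
    rw [Finset.prod_add]
    apply Finset.sum_congr rfl
    intro σ _
    rw [Finset.prod_const_one, mul_one, lam, ← Finset.prod_pow, ← Finset.prod_inv_distrib]
  have h3 : ∏ k ∈ Finset.range N, ((((1:ℝ) + k) ^ 2)⁻¹ + 1)
      ≤ Real.exp (∑ k ∈ Finset.range N, (((1:ℝ) + k) ^ 2)⁻¹) := by
    rw [Real.exp_sum]
    apply Finset.prod_le_prod (fun k _ => by positivity)
    intro k _
    have := Real.add_one_le_exp ((((1:ℝ) + k) ^ 2)⁻¹)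
    linarith
  have h4 := Real.exp_le_exp.2 (basel N)
  linarith

lemma sum_abs_le (p : ℝ) (ξ : Finset ℕ →₀ ℂ) :
    ∑ σ ∈ ξ.support, ‖ξ σ‖ * lam σ ^ p ≤ Real.exp 2 * normq (p + 2) ξ := by
  have step : ∀ σ ∈ ξ.support, ‖ξ σ‖ * lam σ ^ p ≤ ((lam σ) ^ 2)⁻¹ * normq (p + 2) ξ := by
    intro σ _
    have hpos := lam_pos σ
    have hkey : ‖ξ σ‖ * lam σ ^ p = ((lam σ) ^ 2)⁻¹ * (lam σ ^ (p + 2) * ‖ξ σ‖) := by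
      rw [Real.rpow_add hpos]
      have h2 : lam σ ^ (2:ℝ) = (lam σ) ^ 2 := by
        rw [show (2:ℝ) = ((2:ℕ):ℝ) by norm_num, Real.rpow_natCast]
      rw [h2]
      field_simp
    rw [hkey]
    apply mul_le_mul_of_nonneg_left (term_le_normq (p + 2) ξ σ) (by positivity)
  calc ∑ σ ∈ ξ.support, ‖ξ σ‖ * lam σ ^ p
      ≤ ∑ σ ∈ ξ.support, ((lam σ) ^ 2)⁻¹ * normq (p + 2) ξ := Finset.sum_le_sum step
    _ = (∑ σ ∈ ξ.support, ((lam σ) ^ 2)⁻¹) * normq (p + 2) ξ := by rw [Finset.sum_mul]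
    _ ≤ Real.exp 2 * normq (p + 2) ξ :=
        mul_le_mul_of_nonneg_right (sum_lam_inv_le _) (normq_nonneg _ _)

/-- **Characterization theorem for operators via the 2D-Fock transform.** A function
`G : Γ × Γ → ℂ` is the 2D-Fock transform `G(σ,τ) = ⟨⟨T Z_σ, Z_τ⟩⟩` of a continuous
linear operator `T : S → S*` — modeled here as a bilinear form `B(ξ,η) = ⟨⟨Tξ, η⟩⟩` on
the (dense) subspace of finite linear combinations of the `Z_σ`, which is continuous in
the sense that `|B(ξ,η)| ≤ M ‖ξ‖_q ‖η‖_q` for some `M, q ≥ 0` — if and only if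
`|G(σ,τ)| ≤ C λ_σ^p λ_τ^p` for some constants `C ≥ 0`, `p ≥ 0`.
Moreover, such an operator is unique. -/
theorem stmt19 (G : Finset ℕ → Finset ℕ → ℂ) :
    ((∃ B : (Finset ℕ →₀ ℂ) →ₗ[ℂ] ((Finset ℕ →₀ ℂ) →ₗ[ℂ] ℂ),
        (∃ M q : ℝ, 0 ≤ M ∧ 0 ≤ q ∧
          ∀ ξ η : Finset ℕ →₀ ℂ, ‖B ξ η‖ ≤ M * normq q ξ * normq q η) ∧
        ∀ σ τ : Finset ℕ,
          B (Finsupp.single σ (1 : ℂ)) (Finsupp.single τ (1 : ℂ)) = G σ τ) ↔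
      (∃ C p : ℝ, 0 ≤ C ∧ 0 ≤ p ∧
        ∀ σ τ : Finset ℕ, ‖G σ τ‖ ≤ C * lam σ ^ p * lam τ ^ p)) ∧
    ∀ B₁ B₂ : (Finset ℕ →₀ ℂ) →ₗ[ℂ] ((Finset ℕ →₀ ℂ) →ₗ[ℂ] ℂ),
      (∀ σ τ : Finset ℕ,
        B₁ (Finsupp.single σ (1 : ℂ)) (Finsupp.single τ (1 : ℂ)) = G σ τ) →
      (∀ σ τ : Finset ℕ,
        B₂ (Finsupp.single σ (1 : ℂ)) (Finsupp.single τ (1 : ℂ)) = G σ τ) →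
      B₁ = B₂ := by
  constructor
  · constructor
    · rintro ⟨B, ⟨M, q, hM, hq, hbound⟩, hBG⟩
      refine ⟨M, q, hM, hq, fun σ τ => ?_⟩
      rw [← hBG σ τ]
      calc ‖B (Finsupp.single σ 1) (Finsupp.single τ 1)‖
          ≤ M * normq q (Finsupp.single σ 1) * normq q (Finsupp.single τ 1) := hbound _ _
        _ = M * lam σ ^ q * lam τ ^ q := by rw [normq_single, normq_single]
    · rintro ⟨C, p, hC, hp, hG⟩
      set B : (Finset ℕ →₀ ℂ) →ₗ[ℂ] ((Finset ℕ →₀ ℂ) →ₗ[ℂ] ℂ) :=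
        Finsupp.linearCombination ℂ (fun σ => Finsupp.linearCombination ℂ (G σ)) with hBdef
      have hBsingle : ∀ σ τ : Finset ℕ,
          B (Finsupp.single σ (1 : ℂ)) (Finsupp.single τ (1 : ℂ)) = G σ τ := by
        intro σ τ
        rw [hBdef]
        simp [Finsupp.linearCombination_single]
      have hBapply : ∀ ξ η : Finset ℕ →₀ ℂ,
          B ξ η = ∑ σ ∈ ξ.support, ξ σ * ∑ τ ∈ η.support, η τ * G σ τ := by
        intro ξ η
        rw [hBdef]
        simp only [Finsupp.linearCombination_apply, Finsupp.sum]
        rw [LinearMap.coe_sum, Finset.sum_apply]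
        apply Finset.sum_congr rfl
        intro σ _
        simp [Finsupp.linearCombination_apply, Finsupp.sum, smul_eq_mul]
      refine ⟨B, ⟨C * Real.exp 2 * Real.exp 2, p + 2, by positivity, by linarith, ?_⟩, hBsingle⟩
      intro ξ η
      rw [hBapply]
      have h1 : ‖∑ σ ∈ ξ.support, ξ σ * ∑ τ ∈ η.support, η τ * G σ τ‖
          ≤ ∑ σ ∈ ξ.support, ‖ξ σ‖ * ∑ τ ∈ η.support, ‖η τ‖ * ‖G σ τ‖ := by
        refine (norm_sum_le _ _).trans (Finset.sum_le_sum fun σ _ => ?_)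
        rw [norm_mul]
        refine mul_le_mul_of_nonneg_left ?_ (norm_nonneg _)
        refine (norm_sum_le _ _).trans (Finset.sum_le_sum fun τ _ => ?_)
        rw [norm_mul]
      have h2 : ∑ σ ∈ ξ.support, ‖ξ σ‖ * ∑ τ ∈ η.support, ‖η τ‖ * ‖G σ τ‖
          ≤ ∑ σ ∈ ξ.support, ‖ξ σ‖ * ∑ τ ∈ η.support, ‖η τ‖ * (C * lam σ ^ p * lam τ ^ p) := by
        refine Finset.sum_le_sum fun σ _ => ?_
        refine mul_le_mul_of_nonneg_left ?_ (norm_nonneg _)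
        exact Finset.sum_le_sum fun τ _ => mul_le_mul_of_nonneg_left (hG σ τ) (norm_nonneg _)
      have h3 : ∑ σ ∈ ξ.support, ‖ξ σ‖ * ∑ τ ∈ η.support, ‖η τ‖ * (C * lam σ ^ p * lam τ ^ p)
          = C * (∑ σ ∈ ξ.support, ‖ξ σ‖ * lam σ ^ p) * (∑ τ ∈ η.support, ‖η τ‖ * lam τ ^ p) := by
        rw [mul_assoc, Finset.sum_mul_sum, Finset.mul_sum]
        refine Finset.sum_congr rfl fun σ _ => ?_
        rw [Finset.mul_sum, Finset.mul_sum]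
        refine Finset.sum_congr rfl fun τ _ => ?_
        ring
      have h4 := sum_abs_le p ξ
      have h5 := sum_abs_le p η
      have hξnn : 0 ≤ ∑ σ ∈ ξ.support, ‖ξ σ‖ * lam σ ^ p :=
        Finset.sum_nonneg fun σ _ => mul_nonneg (norm_nonneg _) (Real.rpow_nonneg (lam_pos σ).le _)
      have hηnn : 0 ≤ ∑ τ ∈ η.support, ‖η τ‖ * lam τ ^ p :=
        Finset.sum_nonneg fun τ _ => mul_nonneg (norm_nonneg _) (Real.rpow_nonneg (lam_pos τ).le _)
      have hNξ := normq_nonneg (p + 2) ξ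
      have hNη := normq_nonneg (p + 2) η
      have hexp : (0:ℝ) ≤ Real.exp 2 := (Real.exp_pos 2).le
      calc ‖∑ σ ∈ ξ.support, ξ σ * ∑ τ ∈ η.support, η τ * G σ τ‖
          ≤ C * (∑ σ ∈ ξ.support, ‖ξ σ‖ * lam σ ^ p) * (∑ τ ∈ η.support, ‖η τ‖ * lam τ ^ p) := by
            rw [← h3]; exact h1.trans h2
        _ ≤ C * (Real.exp 2 * normq (p + 2) ξ) * (Real.exp 2 * normq (p + 2) η) := by
            apply mul_le_mul
            · exact mul_le_mul_of_nonneg_left h4 hC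
            · exact h5
            · exact hηnn
            · positivity
        _ = C * Real.exp 2 * Real.exp 2 * normq (p + 2) ξ * normq (p + 2) η := by ring
  · intro B₁ B₂ h1 h2
    apply Finsupp.lhom_ext
    intro σ c
    have hc : Finsupp.single σ c = c • Finsupp.single σ (1:ℂ) := by
      rw [Finsupp.smul_single, smul_eq_mul, mul_one]
    rw [hc, map_smul, map_smul]
    congr 1
    apply Finsupp.lhom_ext
    intro τ d
    have hd : Finsupp.single τ d = d • Finsupp.single τ (1:ℂ) := by
      rw [Finsupp.smul_single, smul_eq_mul, mul_one]
    rw [hd, map_smul, map_smul, h1 σ τ, h2 σ τ]
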